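/- Let π be a probability measure on a measurable space X and let μ be a probability measure on X with μ ≪ π and density f = dμ/dπ. Then H(μ∣π) ≤ (1/2) ∬_{X×X} F(f(x), f(y)) dπ(x) dπ(y), where both sides are interpreted as values in [0,∞]. -/

import Mathlib

open MeasureTheory
open scoped ENNReal Classical

/-- The integrand of the nonlocal relative Fisher information:
`F(r,s) = (r−s)(log r − log s)` for `r,s > 0`, `F(0,0) = 0`, and
`F(r,0) = F(0,r) = ∞` for `r > 0`. -/
noncomputable def Fent (r s : ℝ) : ℝ≥0∞ :=
  if 0 < r ∧ 0 < s then ENNReal.ofReal ((r - s) * (Real.log r - Real.log s))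
  else if r = 0 ∧ s = 0 then 0
  else ⊤

/-- Relative entropy `H(μ∣ν) = ∫ (g log g − g + 1) dν ∈ [0,∞]` with `g = dμ/dν`,
if `μ ≪ ν`, and `H(μ∣ν) = ∞` otherwise. For probability measures `μ ≪ ν` this equals
`∫ g log g dν`. -/
noncomputable def relEnt {X : Type*} [MeasurableSpace X] (μ ν : Measure X) : ℝ≥0∞ :=
  if μ ≪ ν then
    ∫⁻ x, ENNReal.ofReal ((μ.rnDeriv ν x).toReal * Real.log (μ.rnDeriv ν x).toReal
        - (μ.rnDeriv ν x).toReal + 1) ∂ν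
  else ⊤

lemma measurable_fent : Measurable (fun p : ℝ × ℝ => Fent p.1 p.2) := by
  unfold Fent
  refine Measurable.ite ?_ ?_ (Measurable.ite ?_ measurable_const measurable_const)
  · exact (measurableSet_lt measurable_const measurable_fst).inter
      (measurableSet_lt measurable_const measurable_snd)
  · exact ENNReal.measurable_ofReal.comp ((measurable_fst.sub measurable_snd).mul
      ((Real.measurable_log.comp measurable_fst).sub (Real.measurable_log.comp measurable_snd)))
  · exact (measurableSet_eq_fun measurable_fst measurable_const).inter
      (measurableSet_eq_fun measurable_snd measurable_const)

lemma phi_nonneg {r : ℝ} (hr : 0 ≤ r) : 0 ≤ r * Real.log r - r + 1 := by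
  rcases eq_or_lt_of_le hr with h | h
  · simp [← h]
  · have h1 : Real.log r⁻¹ ≤ r⁻¹ - 1 := Real.log_le_sub_one_of_pos (by positivity)
    rw [Real.log_inv] at h1
    have h2 : r * (-Real.log r) ≤ r * (r⁻¹ - 1) :=
      mul_le_mul_of_nonneg_left h1 h.le
    rw [mul_sub, mul_inv_cancel₀ h.ne'] at h2
    nlinarith

lemma freal_nonneg {r s : ℝ} (hr : 0 < r) (hs : 0 < s) :
    0 ≤ (r - s) * (Real.log r - Real.log s) := by
  rcases le_total r s with h | h
  · have hl := Real.log_le_log hr h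
    nlinarith
  · have hl := Real.log_le_log hs h
    nlinarith

lemma log_le_self_of_nonneg {r : ℝ} (hr : 0 ≤ r) : Real.log r ≤ r := by
  rcases eq_or_lt_of_le hr with h | h
  · simp [← h]
  · have := Real.log_le_sub_one_of_pos h
    linarith

/-- **The relative entropy is dominated by half the double integral of the Fisher
integrand.** If `μ, π` are probability measures with `μ ≪ π` and density `f = dμ/dπ`,
then `H(μ∣π) ≤ (1/2) ∬ F(f(x), f(y)) dπ(x) dπ(y)`. -/
theorem relEnt_le_half_double_integral_Fent {X : Type*} [MeasurableSpace X]
    (π μ : Measure X) [IsProbabilityMeasure π] [IsProbabilityMeasure μ]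
    (hac : μ ≪ π) :
    relEnt μ π ≤ (1/2 : ℝ≥0∞) *
      ∫⁻ x, ∫⁻ y, Fent (μ.rnDeriv π x).toReal (μ.rnDeriv π y).toReal ∂π ∂π := by
  classical
  set f : X → ℝ := fun x => (μ.rnDeriv π x).toReal with hf_def
  have hfm : Measurable f := (Measure.measurable_rnDeriv μ π).ennreal_toReal
  have hfnn : ∀ x, 0 ≤ f x := fun x => ENNReal.toReal_nonneg
  have hdfin : ∀ᵐ x ∂π, μ.rnDeriv π x < ⊤ := Measure.rnDeriv_lt_top μ π
  have hof : ∀ᵐ x ∂π, ENNReal.ofReal (f x) = μ.rnDeriv π x := by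
    filter_upwards [hdfin] with x hx
    simp [hf_def, ENNReal.ofReal_toReal hx.ne]
  have hint1 : ∫⁻ x, ENNReal.ofReal (f x) ∂π = 1 := by
    rw [lintegral_congr_ae hof, Measure.lintegral_rnDeriv hac, measure_univ]
  rw [relEnt, if_pos hac]
  show ∫⁻ x, ENNReal.ofReal (f x * Real.log (f x) - f x + 1) ∂π
      ≤ (1/2 : ℝ≥0∞) * ∫⁻ x, ∫⁻ y, Fent (f x) (f y) ∂π ∂π
  have hmeasF : Measurable (fun z : X × X => Fent (f z.1) (f z.2)) :=
    measurable_fent.comp ((hfm.comp measurable_fst).prodMk (hfm.comp measurable_snd))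
  by_cases hpos : ∀ᵐ x ∂π, 0 < f x
  · -- main case : f > 0 a.e.
    by_cases hRHS : ∫⁻ x, ∫⁻ y, Fent (f x) (f y) ∂π ∂π = ⊤
    · rw [hRHS, ENNReal.mul_top (by norm_num)]; exact le_top
    have hiter : ∫⁻ x, ∫⁻ y, Fent (f x) (f y) ∂π ∂π
        = ∫⁻ z, Fent (f z.1) (f z.2) ∂(π.prod π) := (lintegral_prod _ hmeasF.aemeasurable).symm
    have hps : ∀ᵐ z ∂(π.prod π), 0 < f z.1 ∧ 0 < f z.2 := by
      have h1 : ∀ᵐ z ∂(π.prod π), 0 < f z.1 := by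
        rw [ae_iff] at hpos ⊢
        have hset : {z : X × X | ¬ 0 < f z.1} = {x | ¬ 0 < f x} ×ˢ Set.univ := by
          ext z; simp
        rw [hset, Measure.prod_prod, hpos, zero_mul]
      have h2 : ∀ᵐ z ∂(π.prod π), 0 < f z.2 := by
        rw [ae_iff] at hpos ⊢
        have hset : {z : X × X | ¬ 0 < f z.2} = (Set.univ : Set X) ×ˢ {x | ¬ 0 < f x} := by
          ext z; simp
        rw [hset, Measure.prod_prod, hpos, mul_zero]
      exact h1.and h2
    set Freal : X × X → ℝ :=
      fun z => (f z.1 - f z.2) * (Real.log (f z.1) - Real.log (f z.2)) with hFr_def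
    have hFrm : Measurable Freal :=
      ((hfm.comp measurable_fst).sub (hfm.comp measurable_snd)).mul
        ((Real.measurable_log.comp (hfm.comp measurable_fst)).sub
          (Real.measurable_log.comp (hfm.comp measurable_snd)))
    have hfeq : ∀ᵐ z ∂(π.prod π), Fent (f z.1) (f z.2) = ENNReal.ofReal (Freal z) := by
      filter_upwards [hps] with z hz
      rw [Fent, if_pos hz]
    have hFnn : ∀ᵐ z ∂(π.prod π), 0 ≤ Freal z := by
      filter_upwards [hps] with z hz
      exact freal_nonneg hz.1 hz.2
    have hFlint : ∫⁻ z, ENNReal.ofReal (Freal z) ∂(π.prod π) ≠ ⊤ := by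
      rw [← lintegral_congr_ae hfeq, ← hiter]; exact hRHS
    have hFint : Integrable Freal (π.prod π) :=
      ⟨hFrm.aestronglyMeasurable, (hasFiniteIntegral_iff_ofReal hFnn).2 hFlint.lt_top⟩
    -- the set where f ≥ 1 has positive measure
    have hTne : π {y | 1 ≤ f y} ≠ 0 := by
      intro h0
      have hlt : ∀ᵐ y ∂π, f y < 1 := by
        rw [ae_iff]; simpa [not_lt] using h0
      have hle : (fun x => ENNReal.ofReal (f x)) ≤ᵐ[π] fun _ => (1:ℝ≥0∞) := by
        filter_upwards [hlt] with x hx; exact ENNReal.ofReal_le_one.2 hx.le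
      have hsub : ∫⁻ x, ((1:ℝ≥0∞) - ENNReal.ofReal (f x)) ∂π = 0 := by
        rw [lintegral_sub hfm.ennreal_ofReal (by rw [hint1]; exact ENNReal.one_ne_top) hle]
        simp [hint1]
      have hz := (lintegral_eq_zero_iff (measurable_const.sub hfm.ennreal_ofReal)).1 hsub
      have hge : ∀ᵐ x ∂π, 1 ≤ f x := by
        filter_upwards [hz] with x hx
        exact ENNReal.one_le_ofReal.1 (tsub_eq_zero_iff_le.mp hx)
      have hfls : ∀ᵐ _x ∂π, False := by
        filter_upwards [hge, hlt] with x h1 h2; linarith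
      have : (ae π).NeBot := ae_neBot.2 (IsProbabilityMeasure.ne_zero (μ := π))
      obtain ⟨x, hx⟩ := hfls.exists
      exact hx
    -- finiteness of ∫⁻ ofReal (−log f)
    have hBfin : ∫⁻ x, ENNReal.ofReal (-Real.log (f x)) ∂π ≠ ⊤ := by
      intro hB
      apply hRHS
      set S : Set X := {x | f x ≤ 1/2} with hS_def
      have hS : MeasurableSet S := measurableSet_le hfm measurable_const
      have hcompl : ∫⁻ x in Sᶜ, ENNReal.ofReal (-Real.log (f x)) ∂π ≠ ⊤ := by
        have hb : ∀ x ∈ Sᶜ, ENNReal.ofReal (-Real.log (f x)) ≤ ENNReal.ofReal (Real.log 2) := by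
          intro x hx
          have hx2 : (1:ℝ)/2 < f x := not_le.mp hx
          apply ENNReal.ofReal_le_ofReal
          have h := Real.log_le_log (by norm_num : (0:ℝ) < 1/2) hx2.le
          rw [show (1:ℝ)/2 = 2⁻¹ by norm_num, Real.log_inv] at h
          linarith
        refine ne_top_of_le_ne_top ?_ (setLIntegral_mono (by fun_prop) hb)
        rw [setLIntegral_const]
        exact ENNReal.mul_ne_top ENNReal.ofReal_ne_top (measure_ne_top _ _)
      have hSinf : ∫⁻ x in S, ENNReal.ofReal (-Real.log (f x)) ∂π = ⊤ := by
        by_contra hfin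
        rw [← lintegral_add_compl _ hS] at hB
        exact (ENNReal.add_ne_top.2 ⟨hfin, hcompl⟩) hB
      have hlow : ∀ᵐ x ∂(π.restrict S),
          π {y | 1 ≤ f y} * ENNReal.ofReal (2⁻¹ * (-Real.log (f x)))
            ≤ ∫⁻ y, Fent (f x) (f y) ∂π := by
        rw [ae_restrict_iff' hS]
        filter_upwards [hpos] with x hx hxS
        have hxle : f x ≤ 1/2 := hxS
        have hptwise : ∀ y ∈ {y | 1 ≤ f y},
            ENNReal.ofReal (2⁻¹ * (-Real.log (f x))) ≤ Fent (f x) (f y) := by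
          intro y hy
          have hy1 : (1:ℝ) ≤ f y := hy
          have hfy : (0:ℝ) < f y := by linarith
          rw [Fent, if_pos ⟨hx, hfy⟩]
          apply ENNReal.ofReal_le_ofReal
          have hlogx : Real.log (f x) ≤ 0 := Real.log_nonpos (hfnn x) (by linarith)
          have hlogy : (0:ℝ) ≤ Real.log (f y) := Real.log_nonneg hy1
          nlinarith [mul_le_mul (by linarith : (2:ℝ)⁻¹ ≤ f y - f x)
            (by linarith : -Real.log (f x) ≤ Real.log (f y) - Real.log (f x))
            (by linarith) (by linarith)]
        calc π {y | 1 ≤ f y} * ENNReal.ofReal (2⁻¹ * (-Real.log (f x)))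
            = ∫⁻ y in {y | 1 ≤ f y}, ENNReal.ofReal (2⁻¹ * (-Real.log (f x))) ∂π := by
              rw [setLIntegral_const, mul_comm]
          _ ≤ ∫⁻ y in {y | 1 ≤ f y}, Fent (f x) (f y) ∂π :=
              setLIntegral_mono (measurable_fent.comp (measurable_const.prodMk hfm)) hptwise
          _ ≤ ∫⁻ y, Fent (f x) (f y) ∂π := lintegral_mono' Measure.restrict_le_self le_rfl
      have h1 : ∫⁻ x in S, π {y | 1 ≤ f y} * ENNReal.ofReal (2⁻¹ * (-Real.log (f x))) ∂π = ⊤ := by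
        have hrw : ∀ x, π {y | 1 ≤ f y} * ENNReal.ofReal (2⁻¹ * (-Real.log (f x)))
            = (π {y | 1 ≤ f y} * ENNReal.ofReal 2⁻¹) * ENNReal.ofReal (-Real.log (f x)) := by
          intro x
          rw [ENNReal.ofReal_mul (by norm_num : (0:ℝ) ≤ 2⁻¹), mul_assoc]
        simp_rw [hrw]
        rw [lintegral_const_mul (f := fun x => ENNReal.ofReal (-Real.log (f x))) _ (hfm.log.neg.ennreal_ofReal), hSinf,
          ENNReal.mul_top]
        exact mul_ne_zero hTne (by simp)
      exact eq_top_mono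
        (le_trans (lintegral_mono_ae hlow) (lintegral_mono' Measure.restrict_le_self le_rfl)) h1
    -- integrability of log ∘ f
    have hlogm : Measurable (fun x => Real.log (f x)) := Real.measurable_log.comp hfm
    have hlogint : Integrable (fun x => Real.log (f x)) π := by
      refine ⟨hlogm.aestronglyMeasurable, ?_⟩
      rw [hasFiniteIntegral_iff_norm]
      have hb : ∀ x, ENNReal.ofReal ‖Real.log (f x)‖
          ≤ ENNReal.ofReal (Real.log (f x)) + ENNReal.ofReal (-Real.log (f x)) := by
        intro x
        rcases abs_cases (Real.log (f x)) with ⟨h1, _⟩ | ⟨h1, _⟩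
        · rw [Real.norm_eq_abs, h1]; exact le_self_add
        · rw [Real.norm_eq_abs, h1]; exact le_add_self
      refine lt_of_le_of_lt (lintegral_mono hb) ?_
      rw [lintegral_add_left hlogm.ennreal_ofReal]
      refine ENNReal.add_lt_top.2 ⟨?_, hBfin.lt_top⟩
      refine lt_of_le_of_lt (lintegral_mono fun x =>
        ENNReal.ofReal_le_ofReal (log_le_self_of_nonneg (hfnn x))) ?_
      rw [hint1]; exact ENNReal.one_lt_top
    have hfint : Integrable f π :=
      ⟨hfm.aestronglyMeasurable,
        (hasFiniteIntegral_iff_ofReal (ae_of_all _ hfnn)).2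
          (by rw [hint1]; exact ENNReal.one_lt_top)⟩
    have hIf : ∫ x, f x ∂π = 1 := by
      have h := ofReal_integral_eq_lintegral_ofReal hfint (ae_of_all _ hfnn)
      rw [hint1] at h
      exact ENNReal.ofReal_eq_one.1 h
    have hL : ∫ x, Real.log (f x) ∂π ≤ 0 := by
      have hmono : ∀ᵐ x ∂π, Real.log (f x) ≤ f x - 1 := by
        filter_upwards [hpos] with x hx
        exact Real.log_le_sub_one_of_pos hx
      calc ∫ x, Real.log (f x) ∂π ≤ ∫ x, (f x - 1) ∂π :=
            integral_mono_ae hlogint (hfint.sub (integrable_const 1)) hmono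
        _ = 0 := by rw [integral_sub hfint (integrable_const 1), hIf]; simp
    have hmapfst : (π.prod π).map Prod.fst = π := by rw [Measure.map_fst_prod]; simp
    have hmapsnd : (π.prod π).map Prod.snd = π := by rw [Measure.map_snd_prod]; simp
    have keyfst : ∀ g : X → ℝ, Measurable g →
        (Integrable (fun z : X × X => g z.1) (π.prod π) ↔ Integrable g π) := by
      intro g hg
      have h := integrable_map_measure (μ := π.prod π) (f := Prod.fst)
        (by rw [hmapfst]; exact hg.aestronglyMeasurable) measurable_fst.aemeasurable
      rw [hmapfst] at h
      exact h.symm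
    have keysnd : ∀ g : X → ℝ, Measurable g →
        (Integrable (fun z : X × X => g z.2) (π.prod π) ↔ Integrable g π) := by
      intro g hg
      have h := integrable_map_measure (μ := π.prod π) (f := Prod.snd)
        (by rw [hmapsnd]; exact hg.aestronglyMeasurable) measurable_snd.aemeasurable
      rw [hmapsnd] at h
      exact h.symm
    have intfst : ∀ g : X → ℝ, Measurable g →
        ∫ z : X × X, g z.1 ∂(π.prod π) = ∫ x, g x ∂π := by
      intro g hg
      have h := integral_map (μ := π.prod π) (φ := Prod.fst) measurable_fst.aemeasurable
        (by rw [hmapfst]; exact hg.aestronglyMeasurable)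
      rw [hmapfst] at h
      exact h.symm
    have intsnd : ∀ g : X → ℝ, Measurable g →
        ∫ z : X × X, g z.2 ∂(π.prod π) = ∫ x, g x ∂π := by
      intro g hg
      have h := integral_map (μ := π.prod π) (φ := Prod.snd) measurable_snd.aemeasurable
        (by rw [hmapsnd]; exact hg.aestronglyMeasurable)
      rw [hmapsnd] at h
      exact h.symm
    have hφm : Measurable (fun x => f x * Real.log (f x) - f x + 1) :=
      ((hfm.mul hlogm).sub hfm).add measurable_const
    have ig1 : Integrable (fun z : X × X => f z.1 - 1 - Real.log (f z.1) * f z.2) (π.prod π) :=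
      (((keyfst f hfm).2 hfint).sub (integrable_const 1)).sub (hlogint.mul_prod hfint)
    have ig2 : Integrable (fun z : X × X => f z.2 - 1 - f z.1 * Real.log (f z.2)) (π.prod π) :=
      (((keysnd f hfm).2 hfint).sub (integrable_const 1)).sub (hfint.mul_prod hlogint)
    have hidentity : Freal = fun z : X × X =>
        ((f z.1 * Real.log (f z.1) - f z.1 + 1) + (f z.2 * Real.log (f z.2) - f z.2 + 1))
        + ((f z.1 - 1 - Real.log (f z.1) * f z.2) + (f z.2 - 1 - f z.1 * Real.log (f z.2))) := by
      funext z
      show (f z.1 - f z.2) * (Real.log (f z.1) - Real.log (f z.2)) = _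
      ring
    have hsum : Integrable (fun z : X × X =>
        (f z.1 * Real.log (f z.1) - f z.1 + 1)
          + (f z.2 * Real.log (f z.2) - f z.2 + 1)) (π.prod π) := by
      have h : (fun z : X × X =>
          (f z.1 * Real.log (f z.1) - f z.1 + 1) + (f z.2 * Real.log (f z.2) - f z.2 + 1))
          = fun z => Freal z - ((f z.1 - 1 - Real.log (f z.1) * f z.2)
            + (f z.2 - 1 - f z.1 * Real.log (f z.2))) := by
        funext z
        show _ = (f z.1 - f z.2) * (Real.log (f z.1) - Real.log (f z.2)) - _
        ring
      rw [h]
      exact hFint.sub (ig1.add ig2)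
    have hphi1 : Integrable (fun z : X × X => f z.1 * Real.log (f z.1) - f z.1 + 1) (π.prod π) := by
      refine hsum.mono' (hφm.comp measurable_fst).aestronglyMeasurable (ae_of_all _ fun z => ?_)
      rw [Real.norm_eq_abs, abs_of_nonneg (phi_nonneg (hfnn _))]
      exact le_add_of_nonneg_right (phi_nonneg (hfnn _))
    have hphi2 : Integrable (fun z : X × X => f z.2 * Real.log (f z.2) - f z.2 + 1) (π.prod π) := by
      refine hsum.mono' (hφm.comp measurable_snd).aestronglyMeasurable (ae_of_all _ fun z => ?_)
      rw [Real.norm_eq_abs, abs_of_nonneg (phi_nonneg (hfnn _))]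
      exact le_add_of_nonneg_left (phi_nonneg (hfnn _))
    have hphiπ : Integrable (fun x => f x * Real.log (f x) - f x + 1) π :=
      (keyfst _ hφm).1 hphi1
    have hsplit : ∫ z, Freal z ∂(π.prod π)
        = 2 * ∫ x, (f x * Real.log (f x) - f x + 1) ∂π - 2 * ∫ x, Real.log (f x) ∂π := by
      rw [hidentity]
      have hI34 : Integrable (fun z : X × X => (f z.1 - 1 - Real.log (f z.1) * f z.2)
          + (f z.2 - 1 - f z.1 * Real.log (f z.2))) (π.prod π) := ig1.add ig2
      rw [integral_add hsum hI34, integral_add hphi1 hphi2, integral_add ig1 ig2]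
      have iA : Integrable (fun z : X × X => f z.1 - 1) (π.prod π) :=
        ((keyfst f hfm).2 hfint).sub (integrable_const 1)
      have iB : Integrable (fun z : X × X => f z.2 - 1) (π.prod π) :=
        ((keysnd f hfm).2 hfint).sub (integrable_const 1)
      have iC : Integrable (fun z : X × X => Real.log (f z.1) * f z.2) (π.prod π) :=
        hlogint.mul_prod hfint
      have iD : Integrable (fun z : X × X => f z.1 * Real.log (f z.2)) (π.prod π) :=
        hfint.mul_prod hlogint
      rw [integral_sub iA iC, integral_sub ((keyfst f hfm).2 hfint) (integrable_const 1),
        integral_sub iB iD, integral_sub ((keysnd f hfm).2 hfint) (integrable_const 1)]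
      rw [intfst _ hφm, intsnd _ hφm,
        integral_prod_mul (fun x => Real.log (f x)) f, integral_prod_mul f (fun x => Real.log (f x)),
        intfst f hfm, intsnd f hfm, hIf, integral_const]
      simp only [measure_univ, probReal_univ, ENNReal.toReal_one, one_smul, smul_eq_mul]
      ring
    rw [hiter, lintegral_congr_ae hfeq,
      ← ofReal_integral_eq_lintegral_ofReal hFint hFnn,
      ← ofReal_integral_eq_lintegral_ofReal hphiπ (ae_of_all _ fun x => phi_nonneg (hfnn x))]
    rw [show (1/2 : ℝ≥0∞) = ENNReal.ofReal (1/2) by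
      rw [ENNReal.ofReal_div_of_pos (by norm_num)]; norm_num]
    rw [← ENNReal.ofReal_mul (by norm_num : (0:ℝ) ≤ 1/2)]
    apply ENNReal.ofReal_le_ofReal
    rw [hsplit]
    linarith
  · -- degenerate case : f vanishes on a positive measure set, RHS is infinite
    have hU : MeasurableSet {x | 0 < f x} := measurableSet_lt measurable_const hfm
    have hUne : π {x | 0 < f x} ≠ 0 := by
      intro h0
      have hz : ∀ᵐ x ∂π, ENNReal.ofReal (f x) = 0 := by
        have : ∀ᵐ x ∂π, ¬ 0 < f x := by rw [ae_iff]; simpa using h0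
        filter_upwards [this] with x hx
        simp [ENNReal.ofReal_eq_zero, not_lt.mp hx]
      rw [lintegral_congr_ae hz] at hint1
      simp at hint1
    have hZne : π {x | f x = 0} ≠ 0 := by
      intro h0
      apply hpos
      have h : ∀ᵐ x ∂π, ¬ f x = 0 := by rw [ae_iff]; simpa using h0
      filter_upwards [h] with x hx
      exact lt_of_le_of_ne (hfnn x) (Ne.symm hx)
    have hZ : MeasurableSet {x | f x = 0} := hfm (measurableSet_singleton 0)
    have hinner : ∀ x ∈ {x | f x = 0}, ∫⁻ y, Fent (f x) (f y) ∂π = ⊤ := by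
      intro x hx
      have hres : ∫⁻ y in {y | 0 < f y}, Fent (f x) (f y) ∂π = ⊤ := by
        have heq : ∀ y ∈ {y | 0 < f y}, Fent (f x) (f y) = ⊤ := by
          intro y hy
          have hx0 : f x = 0 := hx
          have hy0 : (0:ℝ) < f y := hy
          rw [Fent, hx0, if_neg (fun h => lt_irrefl 0 h.1), if_neg (fun h => hy0.ne' h.2)]
        rw [setLIntegral_congr_fun hU heq, setLIntegral_const]
        exact ENNReal.top_mul hUne
      exact eq_top_mono (lintegral_mono' Measure.restrict_le_self le_rfl) hres
    have htop : ∫⁻ x, ∫⁻ y, Fent (f x) (f y) ∂π ∂π = ⊤ := by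
      have h1 : ∫⁻ x in {x | f x = 0}, ∫⁻ y, Fent (f x) (f y) ∂π ∂π = ⊤ := by
        rw [setLIntegral_congr_fun hZ (fun x hx => hinner x hx), setLIntegral_const]
        exact ENNReal.top_mul hZne
      exact eq_top_mono (lintegral_mono' Measure.restrict_le_self le_rfl) h1
    rw [htop, ENNReal.mul_top (by norm_num)]
    exact le_top
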